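/- Let M be an artinian, reflection-invariant monomial ideal with canonical monomial x^K, and define genus_min(M) as one plus the minimum degree of a socle monomial and genus_max(M) as one plus the maximum degree of a socle monomial. Then for every Laurent monomial x^b: genus_min(M) − 1 ≤ degree(x^b) − rank(x^b) + rank(x^{K−b}) ≤ genus_max(M) − 1. -/

import Mathlib

open Finset

/-- A set of exponent vectors is a monomial ideal iff it is upward closed. -/
def UpClosed {m : ℕ} (M : Set (Fin m → ℕ)) : Prop :=
  ∀ u ∈ M, ∀ v : Fin m → ℕ, (∀ i, u i ≤ v i) → v ∈ M

/-- Artinian: a power of each variable lies in `M`. -/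
def ArtinianMono {m : ℕ} (M : Set (Fin m → ℕ)) : Prop :=
  ∀ i : Fin m, ∃ k : ℕ, (fun j => if j = i then k else 0) ∈ M

/-- Socle monomials: `x^c ∉ M` with `x_i·x^c ∈ M` for all `i`. -/
def MonSoc {m : ℕ} (M : Set (Fin m → ℕ)) : Set (Fin m → ℕ) :=
  {c | c ∉ M ∧ ∀ i : Fin m, (fun j => c j + if j = i then 1 else 0) ∈ M}

/-- `degree⁺(u)`: the sum of the positive coordinates of `u`. -/
def degP {m : ℕ} (w : Fin m → ℤ) : ℤ := ∑ i, max (w i) 0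

/-- total degree -/
def degZ {m : ℕ} (w : Fin m → ℤ) : ℤ := ∑ i, w i

def zvec {m : ℕ} (b : Fin m → ℕ) : Fin m → ℤ := fun i => (b i : ℤ)

/-- rank of a Laurent monomial `x^b` with respect to `M`. -/
noncomputable def rnk {m : ℕ} (M : Set (Fin m → ℕ)) (b : Fin m → ℤ) : ℤ :=
  sInf ((fun c => degP (b - zvec c)) '' MonSoc M) - 1

/-- `M` is level of genus `g`: all socle monomials have degree `g - 1`. -/
def LevelOf {m : ℕ} (M : Set (Fin m → ℕ)) (g : ℤ) : Prop :=
  ∀ c ∈ MonSoc M, degZ (zvec c) = g - 1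

/-- Reflection invariance with canonical monomial `x^K`. -/
def ReflInv {m : ℕ} (M : Set (Fin m → ℕ)) (K : Fin m → ℕ) : Prop :=
  ∀ c ∈ MonSoc M, (∀ i, c i ≤ K i) ∧ (fun i => K i - c i) ∈ MonSoc M

lemma degP_nonneg {m : ℕ} (w : Fin m → ℤ) : 0 ≤ degP w :=
  Finset.sum_nonneg fun i _ => le_max_right _ _

lemma degP_eq {m : ℕ} (w : Fin m → ℤ) : degP w = degZ w + degP (-w) := by
  unfold degP degZ
  rw [← Finset.sum_add_distrib]
  refine Finset.sum_congr rfl fun i _ => ?_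
  simp only [Pi.neg_apply]
  rcases le_total (w i) 0 with h | h
  · rw [max_eq_right h, max_eq_left (by omega)]; ring
  · rw [max_eq_left h, max_eq_right (by omega)]; ring

lemma degZ_sub {m : ℕ} (u v : Fin m → ℤ) : degZ (u - v) = degZ u - degZ v := by
  unfold degZ
  rw [← Finset.sum_sub_distrib]
  rfl

lemma monsoc_nonempty {m : ℕ} (M : Set (Fin m → ℕ)) (hup : UpClosed M)
    (hart : ArtinianMono M) (hproper : (0 : Fin m → ℕ) ∉ M) :
    (MonSoc M).Nonempty := by
  classical
  choose k hk using hart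
  have hsub : Mᶜ ⊆ Set.Icc 0 k := by
    intro c hc
    refine ⟨fun i => Nat.zero_le _, fun i => ?_⟩
    by_contra h
    push_neg at h
    exact hc (hup _ (hk i) c (fun j => by by_cases hj : j = i <;> simp [hj] <;> exact h.le))
  have hfin : (Mᶜ : Set (Fin m → ℕ)).Finite := (Set.finite_Icc 0 k).subset hsub
  obtain ⟨c, hc, hmaxc⟩ := Set.Finite.exists_maximalFor (fun c => ∑ i, c i) _ hfin ⟨0, hproper⟩
  refine ⟨c, hc, fun i => ?_⟩
  by_contra h
  have h2 : (fun j => c j + if j = i then 1 else 0) ∈ (Mᶜ : Set (Fin m → ℕ)) := h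
  have : ∑ j, (c j + if j = i then 1 else 0) ≤ ∑ j, c j := hmaxc h2 (Finset.sum_le_sum fun j _ => Nat.le_add_right _ _)
  rw [Finset.sum_add_distrib, Finset.sum_ite_eq' Finset.univ i (fun _ => 1)] at this
  simp at this


/-- Riemann-Roch inequalities for artinian reflection-invariant monomial
ideals that need not be level. -/
theorem stmt2 {m : ℕ} (M : Set (Fin m → ℕ)) (K : Fin m → ℕ) (gmin gmax : ℤ)
    (hup : UpClosed M) (hart : ArtinianMono M) (hproper : (0 : Fin m → ℕ) ∉ M)
    (hrefl : ReflInv M K)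
    (hmin : IsLeast {d : ℤ | ∃ c ∈ MonSoc M, d = degZ (zvec c)} (gmin - 1))
    (hmax : IsGreatest {d : ℤ | ∃ c ∈ MonSoc M, d = degZ (zvec c)} (gmax - 1))
    (b : Fin m → ℤ) :
    gmin - 1 ≤ degZ b - rnk M b + rnk M (zvec K - b) ∧
      degZ b - rnk M b + rnk M (zvec K - b) ≤ gmax - 1 := by
  have hne := monsoc_nonempty M hup hart hproper
  set A : Set ℤ := (fun c => degP (b - zvec c)) '' MonSoc M with hA
  set C : Set ℤ := (fun c => degP (zvec c - b)) '' MonSoc M with hC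
  have hzK : ∀ c ∈ MonSoc M, zvec (fun i => K i - c i) = zvec K - zvec c := by
    intro c hc
    funext i
    have := (hrefl c hc).1 i
    simp only [zvec, Pi.sub_apply]
    omega
  have hBC : ((fun c => degP ((zvec K - b) - zvec c)) '' MonSoc M) = C := by
    ext x
    constructor
    · rintro ⟨c, hc, rfl⟩
      refine ⟨fun i => K i - c i, (hrefl c hc).2, ?_⟩
      show degP (zvec (fun i => K i - c i) - b) = degP (zvec K - b - zvec c)
      rw [hzK c hc]
      congr 1
      ring
    · rintro ⟨c, hc, rfl⟩
      refine ⟨fun i => K i - c i, (hrefl c hc).2, ?_⟩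
      show degP (zvec K - b - zvec (fun i => K i - c i)) = degP (zvec c - b)
      rw [hzK c hc]
      congr 1
      ring
  have hAne : A.Nonempty := hne.image _
  have hCne : C.Nonempty := hne.image _
  have hAbdd : BddBelow A := ⟨0, by rintro x ⟨c, _, rfl⟩; exact degP_nonneg _⟩
  have hCbdd : BddBelow C := ⟨0, by rintro x ⟨c, _, rfl⟩; exact degP_nonneg _⟩
  have hrnk2 : rnk M (zvec K - b) = sInf C - 1 := by
    unfold rnk; rw [hBC]
  obtain ⟨c0, hc0, ha⟩ := Int.csInf_mem hAne hAbdd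
  obtain ⟨c1, hc1, ht⟩ := Int.csInf_mem hCne hCbdd
  have hrnk1 : rnk M b = sInf A - 1 := rfl
  have key1 : sInf A ≤ degP (b - zvec c1) := csInf_le hAbdd ⟨c1, hc1, rfl⟩
  have key2 : sInf C ≤ degP (zvec c0 - b) := csInf_le hCbdd ⟨c0, hc0, rfl⟩
  have e1 : degP (zvec c1 - b) = degZ (zvec c1) - degZ b + degP (b - zvec c1) := by
    rw [degP_eq, degZ_sub, neg_sub]
  have e0 : degP (b - zvec c0) = degZ b - degZ (zvec c0) + degP (zvec c0 - b) := by
    rw [degP_eq, degZ_sub, neg_sub]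
  have hlo : gmin - 1 ≤ degZ (zvec c1) := hmin.2 ⟨c1, hc1, rfl⟩
  have hhi : degZ (zvec c0) ≤ gmax - 1 := hmax.2 ⟨c0, hc0, rfl⟩
  rw [hrnk1, hrnk2, ← ha, ← ht]
  constructor <;> linarith
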